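/- The Shapley values satisfy efficiency: for any cooperative game ν on d players, the sum over all players i of φ_i(ν) equals ν([d]) − ν(∅), where φ_i(ν) = Σ_{S ⊆ [d]∖{i}} W(|S|,d)·(ν(S∪{i}) − ν(S)) and W(k,d) = k!(d−k−1)!/d!. -/

import Mathlib

open Finset

/-- Shapley weight `W(k, n) = k! (n-k-1)! / n!`. -/
noncomputable def W (k n : ℕ) : ℝ :=
  (Nat.factorial k * Nat.factorial (n - k - 1) : ℝ) / (Nat.factorial n : ℝ)

/-- Shapley value of player `i` in the game `ν` on `d` players. -/
noncomputable def shapley {d : ℕ} (ν : Finset (Fin d) → ℝ) (i : Fin d) : ℝ :=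
  ∑ S ∈ (Finset.univ.erase i).powerset, W S.card d * (ν (insert i S) - ν S)

lemma W_mul_left {k d : ℕ} (hk : 1 ≤ k) (hkd : k ≤ d) :
    (k : ℝ) * W (k - 1) d =
      (Nat.factorial k * Nat.factorial (d - k) : ℝ) / (Nat.factorial d : ℝ) := by
  unfold W
  have h1 : d - (k - 1) - 1 = d - k := by omega
  have h2 : (k : ℝ) * Nat.factorial (k - 1) = Nat.factorial k := by
    rw [← Nat.cast_mul, Nat.mul_factorial_pred (by omega)]
  rw [h1, ← mul_div_assoc, ← mul_assoc, h2]

lemma W_mul_right {k d : ℕ} (hkd : k < d) :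
    ((d - k : ℕ) : ℝ) * W k d =
      (Nat.factorial k * Nat.factorial (d - k) : ℝ) / (Nat.factorial d : ℝ) := by
  unfold W
  have h2 : ((d - k : ℕ) : ℝ) * Nat.factorial (d - k - 1) = Nat.factorial (d - k) := by
    rw [← Nat.cast_mul, Nat.mul_factorial_pred (by omega)]
  rw [← mul_div_assoc, mul_left_comm, h2, mul_comm]

/-- Efficiency: the Shapley values sum to `ν([d]) - ν(∅)`. -/
theorem shapley_efficiency {d : ℕ} (ν : Finset (Fin d) → ℝ) :
    ∑ i : Fin d, shapley ν i = ν Finset.univ - ν ∅ := by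
  rcases Nat.eq_zero_or_pos d with hd | hd
  · subst hd
    simp [Finset.univ_eq_empty]
  have swap : ∀ g : Fin d → Finset (Fin d) → ℝ,
      ∑ i : Fin d, ∑ S ∈ (Finset.univ.erase i).powerset, g i S
        = ∑ S ∈ (Finset.univ : Finset (Fin d)).powerset, ∑ i ∈ Sᶜ, g i S := by
    intro g
    refine Finset.sum_comm' ?_
    intro i S
    simp [Finset.subset_erase]
  have pos : ∑ S ∈ (Finset.univ : Finset (Fin d)).powerset, ∑ i ∈ Sᶜ, W S.card d * ν (insert i S)
      = ∑ T ∈ (Finset.univ : Finset (Fin d)).powerset, ∑ i ∈ T, W (T.card - 1) d * ν T := by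
    rw [Finset.sum_sigma', Finset.sum_sigma']
    refine Finset.sum_bij' (fun p _ => ⟨insert p.2 p.1, p.2⟩)
      (fun p _ => ⟨p.1.erase p.2, p.2⟩) ?_ ?_ ?_ ?_ ?_
    · intro p hp
      simp
    · intro p hp
      simp only [Finset.mem_sigma, Finset.mem_powerset, Finset.mem_compl]
      exact ⟨Finset.subset_univ _, Finset.notMem_erase _ _⟩
    · rintro ⟨S, i⟩ hp
      simp only [Finset.mem_sigma, Finset.mem_powerset, Finset.mem_compl] at hp
      simp [Finset.erase_insert hp.2]
    · rintro ⟨T, i⟩ hp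
      simp only [Finset.mem_sigma] at hp
      simp [Finset.insert_erase hp.2]
    · intro p hp
      simp only [Finset.mem_sigma, Finset.mem_powerset, Finset.mem_compl] at hp
      rw [Finset.card_insert_of_notMem hp.2]
      simp
  unfold shapley
  have expand : ∀ (i : Fin d) (S : Finset (Fin d)),
      W S.card d * (ν (insert i S) - ν S)
        = W S.card d * ν (insert i S) - W S.card d * ν S := fun _ _ => by ring
  simp only [expand]
  rw [swap]
  simp only [Finset.sum_sub_distrib]
  rw [pos]
  have key : ∀ T ∈ (Finset.univ : Finset (Fin d)).powerset,
      (∑ i ∈ T, W (T.card - 1) d * ν T) - (∑ i ∈ Tᶜ, W T.card d * ν T)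
        = ((T.card : ℝ) * W (T.card - 1) d - ((d - T.card : ℕ) : ℝ) * W T.card d) * ν T := by
    intro T _
    rw [Finset.sum_const, Finset.sum_const, Finset.card_compl, Fintype.card_fin,
      nsmul_eq_mul, nsmul_eq_mul]
    ring
  rw [← Finset.sum_sub_distrib, Finset.sum_congr rfl key]
  have hsub : ({∅, Finset.univ} : Finset (Finset (Fin d))) ⊆ Finset.univ.powerset := by
    intro T hT
    simp only [Finset.mem_insert, Finset.mem_singleton] at hT
    rcases hT with h | h <;> simp [h]
  rw [← Finset.sum_subset hsub ?zero]
  case zero =>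
    intro T _ hT
    simp only [Finset.mem_insert, Finset.mem_singleton, not_or] at hT
    have h1 : 1 ≤ T.card := Finset.card_pos.mpr (Finset.nonempty_of_ne_empty hT.1)
    have h2 : T.card < d := by
      have h := Finset.card_lt_card (Finset.ssubset_univ_iff.mpr hT.2)
      simpa using h
    rw [W_mul_left h1 h2.le, W_mul_right h2, sub_self, zero_mul]
  have : Nonempty (Fin d) := ⟨⟨0, hd⟩⟩
  have hne : (∅ : Finset (Fin d)) ≠ Finset.univ :=
    (Finset.univ_nonempty.ne_empty).symm
  rw [Finset.sum_pair hne]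
  have c1 : ((Finset.univ : Finset (Fin d)).card : ℝ) * W ((Finset.univ : Finset (Fin d)).card - 1) d
      - ((d - (Finset.univ : Finset (Fin d)).card : ℕ) : ℝ) * W (Finset.univ : Finset (Fin d)).card d = 1 := by
    rw [Finset.card_univ, Fintype.card_fin, Nat.sub_self, Nat.cast_zero, zero_mul, sub_zero,
      W_mul_left hd le_rfl, Nat.sub_self]
    simp [Nat.factorial, Nat.factorial_ne_zero]
  have c0 : ((∅ : Finset (Fin d)).card : ℝ) * W ((∅ : Finset (Fin d)).card - 1) d
      - ((d - (∅ : Finset (Fin d)).card : ℕ) : ℝ) * W (∅ : Finset (Fin d)).card d = -1 := by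
    have h := W_mul_right (k := 0) hd
    rw [Nat.sub_zero] at h
    rw [Finset.card_empty, Nat.cast_zero, zero_mul, Nat.sub_zero, h]
    simp [Nat.factorial, Nat.factorial_ne_zero]
  rw [c1, c0]
  ring
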